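/- Let E be a finite set, P a stochastic matrix on E, c : E → ℝ bounded by ‖c‖, γ ≠ 0, and suppose (w, λ) with w : E → ℝ and λ ∈ ℝ satisfies the multiplicative Poisson equation w(x) = c(x) − λ + (1/γ) ln Σ_y e^{γ w(y)} P(x,y) for all x ∈ E. Then |λ| ≤ ‖c‖ := max_x |c(x)|. -/
import Mathlib


variable {E : Type*} [Fintype E] [Nonempty E]

/-- A stochastic matrix on `E`. -/
def RowStochastic (P : Matrix E E ℝ) : Prop :=
  (∀ x y, 0 ≤ P x y) ∧ (∀ x, ∑ y, P x y = 1)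

/-- The long-run value in the multiplicative Poisson equation is bounded by the
sup-norm of the reward. -/
theorem MPE_value_bounded
    (P : Matrix E E ℝ) (hP : RowStochastic P)
    (c : E → ℝ) (γ : ℝ) (hγ : γ ≠ 0)
    (w : E → ℝ) (lam : ℝ)
    (hMPE : ∀ x, w x = c x - lam +
      (1 / γ) * Real.log (∑ y, Real.exp (γ * w y) * P x y)) :
    |lam| ≤ Finset.univ.sup' Finset.univ_nonempty (fun x => |c x|) := by
  obtain ⟨hP0, hP1⟩ := hP
  set M : ℝ := Finset.univ.sup' Finset.univ_nonempty w with hMdef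
  set m : ℝ := Finset.univ.inf' Finset.univ_nonempty w with hmdef
  have hwM : ∀ y, w y ≤ M := fun y => Finset.le_sup' w (Finset.mem_univ y)
  have hwm : ∀ y, m ≤ w y := fun y => Finset.inf'_le w (Finset.mem_univ y)
  have key : ∀ x, m ≤ (1 / γ) * Real.log (∑ y, Real.exp (γ * w y) * P x y) ∧
      (1 / γ) * Real.log (∑ y, Real.exp (γ * w y) * P x y) ≤ M := by
    intro x
    set S := ∑ y, Real.exp (γ * w y) * P x y with hSdef
    have hSpos : 0 < S := by
      have hex : ∃ y, 0 < P x y := by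
        by_contra h
        push_neg at h
        have : ∑ y, P x y = 0 := Finset.sum_eq_zero fun y _ =>
          le_antisymm (h y) (hP0 x y)
        rw [hP1 x] at this; norm_num at this
      obtain ⟨y, hy⟩ := hex
      refine Finset.sum_pos' (fun z _ => mul_nonneg (Real.exp_pos _).le (hP0 x z))
        ⟨y, Finset.mem_univ y, mul_pos (Real.exp_pos _) hy⟩
    rcases hγ.lt_or_gt with hneg | hpos
    · have hub : S ≤ Real.exp (γ * m) := by
        calc S ≤ ∑ y, Real.exp (γ * m) * P x y := by
              refine Finset.sum_le_sum fun y _ => ?_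
              exact mul_le_mul_of_nonneg_right
                (Real.exp_le_exp.2 (mul_le_mul_of_nonpos_left (hwm y) hneg.le)) (hP0 x y)
          _ = Real.exp (γ * m) := by rw [← Finset.mul_sum, hP1, mul_one]
      have hlb : Real.exp (γ * M) ≤ S := by
        calc Real.exp (γ * M) = ∑ y, Real.exp (γ * M) * P x y := by
              rw [← Finset.mul_sum, hP1, mul_one]
          _ ≤ S := by
              refine Finset.sum_le_sum fun y _ => ?_
              exact mul_le_mul_of_nonneg_right
                (Real.exp_le_exp.2 (mul_le_mul_of_nonpos_left (hwM y) hneg.le)) (hP0 x y)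
      have h1 : Real.log S ≤ γ * m := by
        rw [Real.log_le_iff_le_exp hSpos]; exact hub
      have h2 : γ * M ≤ Real.log S := by
        rw [Real.le_log_iff_exp_le hSpos]; exact hlb
      have hinv : (1 : ℝ) / γ < 0 := one_div_neg.mpr hneg
      have hcm : (1 / γ) * (γ * m) = m := by field_simp
      have hcM : (1 / γ) * (γ * M) = M := by field_simp
      constructor
      · have := mul_le_mul_of_nonpos_left h1 hinv.le; linarith
      · have := mul_le_mul_of_nonpos_left h2 hinv.le; linarith
    · have hub : S ≤ Real.exp (γ * M) := by
        calc S ≤ ∑ y, Real.exp (γ * M) * P x y := by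
              refine Finset.sum_le_sum fun y _ => ?_
              exact mul_le_mul_of_nonneg_right
                (Real.exp_le_exp.2 (mul_le_mul_of_nonneg_left (hwM y) hpos.le)) (hP0 x y)
          _ = Real.exp (γ * M) := by rw [← Finset.mul_sum, hP1, mul_one]
      have hlb : Real.exp (γ * m) ≤ S := by
        calc Real.exp (γ * m) = ∑ y, Real.exp (γ * m) * P x y := by
              rw [← Finset.mul_sum, hP1, mul_one]
          _ ≤ S := by
              refine Finset.sum_le_sum fun y _ => ?_
              exact mul_le_mul_of_nonneg_right
                (Real.exp_le_exp.2 (mul_le_mul_of_nonneg_left (hwm y) hpos.le)) (hP0 x y)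
      have h1 : Real.log S ≤ γ * M := by
        rw [Real.log_le_iff_le_exp hSpos]; exact hub
      have h2 : γ * m ≤ Real.log S := by
        rw [Real.le_log_iff_exp_le hSpos]; exact hlb
      have hinv : 0 < (1 : ℝ) / γ := by positivity
      have hcm : (1 / γ) * (γ * m) = m := by field_simp
      have hcM : (1 / γ) * (γ * M) = M := by field_simp
      constructor
      · have := mul_le_mul_of_nonneg_left h2 hinv.le; linarith
      · have := mul_le_mul_of_nonneg_left h1 hinv.le; linarith
  obtain ⟨a, -, ha⟩ := Finset.exists_mem_eq_sup' Finset.univ_nonempty w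
  obtain ⟨b, -, hb⟩ := Finset.exists_mem_eq_inf' Finset.univ_nonempty w
  have hMa : w a = M := ha.symm
  have hmb : w b = m := hb.symm
  have hupper : lam ≤ c a := by
    have := hMPE a
    have h2 := (key a).2
    rw [hMa] at this
    linarith
  have hlower : c b ≤ lam := by
    have := hMPE b
    have h2 := (key b).1
    rw [hmb] at this
    linarith
  have hca : |c a| ≤ Finset.univ.sup' Finset.univ_nonempty (fun x => |c x|) :=
    Finset.le_sup' (fun x => |c x|) (Finset.mem_univ a)
  have hcb : |c b| ≤ Finset.univ.sup' Finset.univ_nonempty (fun x => |c x|) :=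
    Finset.le_sup' (fun x => |c x|) (Finset.mem_univ b)
  rw [abs_le]
  constructor
  · have := neg_abs_le (c b); linarith
  · have := le_abs_self (c a); linarith
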